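/- (Lipschitz continuity) Fix a temperature τ > 0, a path-length parameter K ≥ 1, and n ≥ 2. There exists a constant L = L(τ, K, n) > 0 such that for every agent a and every pair of matrices P, P' ∈ [0,1]^{n×n}, the soft Top-Cycle scores satisfy |t_τ(a; P) − t_τ(a; P')| ≤ L · ‖P − P'‖_∞, where ‖·‖_∞ denotes the entrywise supremum norm. -/

import Mathlib

open Filter Topology

/-- The logistic sigmoid. -/
noncomputable def sigmoid (z : ℝ) : ℝ := 1 / (1 + Real.exp (-z))

/-- Soft majority edge matrix `D_τ`. -/
noncomputable def softEdge {n : ℕ} (P : Matrix (Fin n) (Fin n) ℝ) (τ : ℝ) :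
    Matrix (Fin n) (Fin n) ℝ := fun a b => sigmoid ((P a b - 1/2) / τ)

/-- 0/1 adjacency matrix of the hard majority tournament. -/
noncomputable def hardAdj {n : ℕ} (P : Matrix (Fin n) (Fin n) ℝ) : Matrix (Fin n) (Fin n) ℝ :=
  fun a b => if 1/2 < P a b then 1 else 0

/-- Soft reachability matrix `R_τ = Σ_{k=1}^K D_τ^k`. -/
noncomputable def softReach {n : ℕ} (P : Matrix (Fin n) (Fin n) ℝ) (τ : ℝ) (K : ℕ) :
    Matrix (Fin n) (Fin n) ℝ := ∑ k ∈ Finset.Icc 1 K, softEdge P τ ^ k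

/-- softmin over a finite family. -/
noncomputable def softmin {ι : Type*} (τ : ℝ) (s : Finset ι) (f : ι → ℝ) : ℝ :=
  -τ * Real.log (∑ i ∈ s, Real.exp (-(f i) / τ))

/-- scalar soft maximum over a finite family. -/
noncomputable def smax {ι : Type*} (τ : ℝ) (s : Finset ι) (f : ι → ℝ) : ℝ :=
  τ * Real.log (∑ i ∈ s, Real.exp (f i / τ))

/-- Soft Top-Cycle membership score `t_τ(a)`. -/
noncomputable def tcScore {n : ℕ} (P : Matrix (Fin n) (Fin n) ℝ) (τ : ℝ) (K : ℕ) (a : Fin n) : ℝ :=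
  softmin τ ({a}ᶜ : Finset (Fin n)) (fun b => softReach P τ K a b)

/-- Soft cover score `cover_τ(c, a)`. -/
noncomputable def coverScore {n : ℕ} (P : Matrix (Fin n) (Fin n) ℝ) (τ : ℝ) (c a : Fin n) : ℝ :=
  softEdge P τ c a *
    (1 - smax τ (Finset.univ : Finset (Fin n)) (fun b => softEdge P τ a b - softEdge P τ c b))

/-- Soft Uncovered-Set membership score `u_τ(a)`. -/
noncomputable def ucScore {n : ℕ} (P : Matrix (Fin n) (Fin n) ℝ) (τ : ℝ) (a : Fin n) : ℝ :=
  1 - smax τ ({a}ᶜ : Finset (Fin n)) (fun c => coverScore P τ c a)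

/-- `a ≻ b` in the hard majority tournament. -/
def beats {n : ℕ} (P : Matrix (Fin n) (Fin n) ℝ) (a b : Fin n) : Prop := 1/2 < P a b

/-- `a` reaches `b` via a directed path in the hard majority tournament. -/
def reaches {n : ℕ} (P : Matrix (Fin n) (Fin n) ℝ) : Fin n → Fin n → Prop :=
  Relation.TransGen (beats P)

/-- `c` covers `a` in the hard majority tournament. -/
def covers {n : ℕ} (P : Matrix (Fin n) (Fin n) ℝ) (c a : Fin n) : Prop :=
  beats P c a ∧ ∀ b, beats P a b → beats P c b

/-- membership in the Top Cycle of the hard majority tournament. -/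
def inTopCycle {n : ℕ} (P : Matrix (Fin n) (Fin n) ℝ) (a : Fin n) : Prop :=
  ∀ b, b ≠ a → reaches P a b

/-- membership in the Uncovered Set of the hard majority tournament. -/
def inUncovered {n : ℕ} (P : Matrix (Fin n) (Fin n) ℝ) (a : Fin n) : Prop :=
  ∀ c, c ≠ a → ¬ covers P c a

/-- `P` is a probabilistic tournament. -/
def IsProbTournament {n : ℕ} (P : Matrix (Fin n) (Fin n) ℝ) : Prop :=
  (∀ a b, 0 ≤ P a b ∧ P a b ≤ 1) ∧ (∀ a b, P a b + P b a = 1) ∧ ∀ a, P a a = 1/2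

/-- margin assumption with margin `δ`. -/
def HasMargin {n : ℕ} (P : Matrix (Fin n) (Fin n) ℝ) (δ : ℝ) : Prop :=
  ∀ a b, a ≠ b → δ ≤ |P a b - 1/2|


section Helpers

lemma sigmoid_nonneg' (z : ℝ) : 0 ≤ sigmoid z := by
  unfold sigmoid; positivity

lemma sigmoid_le_one' (z : ℝ) : sigmoid z ≤ 1 := by
  unfold sigmoid
  rw [div_le_one (by positivity)]
  nlinarith [Real.exp_pos (-z)]

lemma sigmoid_lip (x y : ℝ) : |sigmoid x - sigmoid y| ≤ |x - y| := by
  wlog h : y ≤ x with H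
  · rw [abs_sub_comm, abs_sub_comm x y]; exact H y x (le_of_not_ge h)
  have hex : (0:ℝ) < Real.exp (-x) := Real.exp_pos _
  have hey : (0:ℝ) < Real.exp (-y) := Real.exp_pos _
  have hmono : Real.exp (-x) ≤ Real.exp (-y) := Real.exp_le_exp.2 (by linarith)
  have hkey : Real.exp (-y) - Real.exp (-x) ≤ Real.exp (-y) * (x - y) := by
    have h1 : Real.exp (-x) = Real.exp (-y) * Real.exp (-x - -y) := by
      rw [← Real.exp_add]; ring_nf
    have h2 : (-x - -y) + 1 ≤ Real.exp (-x - -y) := Real.add_one_le_exp _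
    nlinarith
  have hd : 0 ≤ sigmoid x - sigmoid y := by
    unfold sigmoid
    have hx : (0:ℝ) < 1 + Real.exp (-x) := by positivity
    have hy : (0:ℝ) < 1 + Real.exp (-y) := by positivity
    have : 1 / (1 + Real.exp (-y)) ≤ 1 / (1 + Real.exp (-x)) :=
      one_div_le_one_div_of_le hx (by linarith)
    linarith
  rw [abs_of_nonneg hd, abs_of_nonneg (by linarith : (0:ℝ) ≤ x - y)]
  unfold sigmoid
  have hx : (0:ℝ) < 1 + Real.exp (-x) := by positivity
  have hy : (0:ℝ) < 1 + Real.exp (-y) := by positivity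
  rw [div_sub_div _ _ hx.ne' hy.ne', div_le_iff₀ (by positivity)]
  nlinarith [mul_nonneg (mul_nonneg hex.le hey.le) (by linarith : (0:ℝ) ≤ x - y),
    mul_nonneg hex.le (by linarith : (0:ℝ) ≤ x - y)]

lemma softmin_lip {ι : Type*} (τ : ℝ) (hτ : 0 < τ) (s : Finset ι) (hs : s.Nonempty)
    (f g : ι → ℝ) (M : ℝ) (hM : ∀ i ∈ s, |f i - g i| ≤ M) :
    |softmin τ s f - softmin τ s g| ≤ M := by
  have key : ∀ f g : ι → ℝ, (∀ i ∈ s, |f i - g i| ≤ M) →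
      softmin τ s f - softmin τ s g ≤ M := by
    intro f g h
    unfold softmin
    have hSf : 0 < ∑ i ∈ s, Real.exp (-(f i)/τ) :=
      Finset.sum_pos (fun i _ => Real.exp_pos _) hs
    have hle : ∑ i ∈ s, Real.exp (-(g i)/τ) ≤
        Real.exp (M/τ) * ∑ i ∈ s, Real.exp (-(f i)/τ) := by
      rw [Finset.mul_sum]
      refine Finset.sum_le_sum fun i hi => ?_
      rw [← Real.exp_add]
      apply Real.exp_le_exp.2
      have h1 := (abs_le.1 (h i hi)).2
      rw [← add_div, div_le_div_iff₀ hτ hτ]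
      nlinarith
    have hlog := Real.log_le_log (Finset.sum_pos (fun i _ => Real.exp_pos _) hs) hle
    rw [Real.log_mul (Real.exp_pos _).ne' hSf.ne', Real.log_exp] at hlog
    have := mul_le_mul_of_nonneg_left hlog hτ.le
    rw [mul_add, mul_div_cancel₀ _ hτ.ne'] at this
    nlinarith
  have h1 := key f g hM
  have h2 := key g f (fun i hi => by rw [abs_sub_comm]; exact hM i hi)
  rw [abs_sub_le_iff]; exact ⟨h1, h2⟩

lemma pow_entry_bound {n : ℕ} (A : Matrix (Fin n) (Fin n) ℝ)
    (hA : ∀ a b, 0 ≤ A a b ∧ A a b ≤ 1) (k : ℕ) :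
    ∀ a b, 0 ≤ (A ^ k) a b ∧ (A ^ k) a b ≤ (n:ℝ)^k := by
  induction k with
  | zero =>
    intro a b
    simp only [pow_zero, Matrix.one_apply]
    split <;> norm_num
  | succ k ih =>
    intro a b
    rw [pow_succ', Matrix.mul_apply]
    constructor
    · exact Finset.sum_nonneg fun c _ => mul_nonneg (hA a c).1 (ih c b).1
    · calc ∑ c, A a c * (A ^ k) c b ≤ ∑ _c : Fin n, 1 * (n:ℝ)^k := by
            refine Finset.sum_le_sum fun c _ => ?_
            exact mul_le_mul (hA a c).2 (ih c b).2 (ih c b).1 zero_le_one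
        _ = (n:ℝ)^(k+1) := by
            simp [Finset.sum_const, Finset.card_univ]
            ring

lemma pow_entry_diff {n : ℕ} (A B : Matrix (Fin n) (Fin n) ℝ) (ε : ℝ) (hε : 0 ≤ ε)
    (hA : ∀ a b, 0 ≤ A a b ∧ A a b ≤ 1)
    (hPow : ∀ k a b, 0 ≤ (B ^ k) a b ∧ (B ^ k) a b ≤ (n:ℝ)^k)
    (hAB : ∀ a b, |A a b - B a b| ≤ ε)
    (k : ℕ) : ∀ a b, |(A ^ k) a b - (B ^ k) a b| ≤ (k : ℝ) * (n:ℝ)^k * ε := by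
  induction k with
  | zero => intro a b; simp
  | succ k ih =>
    intro a b
    rw [pow_succ', pow_succ', Matrix.mul_apply, Matrix.mul_apply, ← Finset.sum_sub_distrib]
    calc |∑ c, (A a c * (A ^ k) c b - B a c * (B ^ k) c b)|
        ≤ ∑ c, |A a c * (A ^ k) c b - B a c * (B ^ k) c b| := Finset.abs_sum_le_sum_abs _ _
      _ ≤ ∑ _c : Fin n, ((k:ℝ) * (n:ℝ)^k * ε + (n:ℝ)^k * ε) := by
          refine Finset.sum_le_sum fun c _ => ?_
          have e1 : A a c * (A ^ k) c b - B a c * (B ^ k) c b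
              = A a c * ((A ^ k) c b - (B ^ k) c b) + (A a c - B a c) * (B ^ k) c b := by ring
          rw [e1]
          calc |A a c * ((A ^ k) c b - (B ^ k) c b) + (A a c - B a c) * (B ^ k) c b|
              ≤ |A a c * ((A ^ k) c b - (B ^ k) c b)| + |(A a c - B a c) * (B ^ k) c b| :=
                abs_add_le _ _
            _ ≤ (k:ℝ) * (n:ℝ)^k * ε + (n:ℝ)^k * ε := by
                rw [abs_mul, abs_mul]
                refine add_le_add ?_ ?_
                · calc |A a c| * |(A ^ k) c b - (B ^ k) c b|
                      ≤ 1 * ((k:ℝ) * (n:ℝ)^k * ε) := by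
                        apply mul_le_mul _ (ih c b) (abs_nonneg _) zero_le_one
                        rw [abs_of_nonneg (hA a c).1]; exact (hA a c).2
                    _ = (k:ℝ) * (n:ℝ)^k * ε := one_mul _
                · calc |A a c - B a c| * |(B ^ k) c b|
                      ≤ ε * (n:ℝ)^k := by
                        apply mul_le_mul (hAB a c) _ (abs_nonneg _) hε
                        rw [abs_of_nonneg (hPow k c b).1]; exact (hPow k c b).2
                    _ = (n:ℝ)^k * ε := mul_comm _ _
      _ = (n:ℝ) * ((k:ℝ) * (n:ℝ)^k * ε + (n:ℝ)^k * ε) := by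
          rw [Finset.sum_const, Finset.card_univ, Fintype.card_fin, nsmul_eq_mul]
      _ ≤ ((k:ℝ)+1) * (n:ℝ)^(k+1) * ε := by
          have : (n:ℝ) * ((k:ℝ) * (n:ℝ)^k * ε + (n:ℝ)^k * ε)
              = ((k:ℝ)+1) * ((n:ℝ) * (n:ℝ)^k) * ε := by ring
          rw [this, ← pow_succ']
      _ = ((k+1 : ℕ):ℝ) * (n:ℝ)^(k+1) * ε := by push_cast; ring

end Helpers

/-- Lipschitz continuity of the soft Top-Cycle score with respect to the
entrywise supremum norm on `[0,1]^{n×n}`. -/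
theorem tcScore_lipschitz {n : ℕ} (hn : 2 ≤ n) (τ : ℝ) (hτ : 0 < τ) (K : ℕ) (hK : 1 ≤ K) :
    ∃ L : ℝ, 0 < L ∧
      ∀ (a : Fin n) (P P' : Matrix (Fin n) (Fin n) ℝ),
        (∀ i j, P i j ∈ Set.Icc (0:ℝ) 1) → (∀ i j, P' i j ∈ Set.Icc (0:ℝ) 1) →
        |tcScore P τ K a - tcScore P' τ K a| ≤
          L * Finset.univ.sup'
            ⟨(⟨0, by omega⟩, ⟨0, by omega⟩), Finset.mem_univ _⟩
            (fun p : Fin n × Fin n => |P p.1 p.2 - P' p.1 p.2|) := by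
  have hn0 : (0:ℝ) < (n:ℝ) := by exact_mod_cast (by omega : 0 < n)
  have hn1 : (1:ℝ) ≤ (n:ℝ) := by exact_mod_cast (by omega : 1 ≤ n)
  have hK0 : (0:ℝ) < (K:ℝ) := by exact_mod_cast hK
  refine ⟨(K:ℝ)^2 * (n:ℝ)^K / τ, by positivity, ?_⟩
  intro a P P' _ _
  set Δ := Finset.univ.sup'
      ⟨(⟨0, by omega⟩, ⟨0, by omega⟩), Finset.mem_univ _⟩
      (fun p : Fin n × Fin n => |P p.1 p.2 - P' p.1 p.2|) with hΔdef
  have hΔ : ∀ i j, |P i j - P' i j| ≤ Δ := fun i j =>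
    Finset.le_sup' (fun p : Fin n × Fin n => |P p.1 p.2 - P' p.1 p.2|) (Finset.mem_univ (i, j))
  have hΔ0 : 0 ≤ Δ := le_trans (abs_nonneg _) (hΔ ⟨0, by omega⟩ ⟨0, by omega⟩)
  have hE : ∀ (Q : Matrix (Fin n) (Fin n) ℝ) (i j : Fin n),
      0 ≤ softEdge Q τ i j ∧ softEdge Q τ i j ≤ 1 :=
    fun Q i j => ⟨sigmoid_nonneg' _, sigmoid_le_one' _⟩
  have hEd : ∀ i j, |softEdge P τ i j - softEdge P' τ i j| ≤ Δ / τ := by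
    intro i j
    calc |softEdge P τ i j - softEdge P' τ i j|
        ≤ |((P i j - 1/2)/τ) - ((P' i j - 1/2)/τ)| := sigmoid_lip _ _
      _ = |P i j - P' i j| / τ := by
          rw [div_sub_div_same, abs_div, abs_of_pos hτ]
          ring_nf
      _ ≤ Δ / τ := by gcongr; exact hΔ i j
  have hPowB := pow_entry_bound (softEdge P' τ) (hE P')
  have hreach : ∀ b, |softReach P τ K a b - softReach P' τ K a b|
      ≤ (K:ℝ)^2 * (n:ℝ)^K * (Δ/τ) := by
    intro b
    unfold softReach
    rw [Matrix.sum_apply, Matrix.sum_apply, ← Finset.sum_sub_distrib]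
    calc |∑ k ∈ Finset.Icc 1 K, ((softEdge P τ ^ k) a b - (softEdge P' τ ^ k) a b)|
        ≤ ∑ k ∈ Finset.Icc 1 K, |(softEdge P τ ^ k) a b - (softEdge P' τ ^ k) a b| :=
          Finset.abs_sum_le_sum_abs _ _
      _ ≤ ∑ _k ∈ Finset.Icc 1 K, (K:ℝ) * (n:ℝ)^K * (Δ/τ) := by
          refine Finset.sum_le_sum fun k hk => ?_
          have hkK : k ≤ K := (Finset.mem_Icc.1 hk).2
          calc |(softEdge P τ ^ k) a b - (softEdge P' τ ^ k) a b|
              ≤ (k:ℝ) * (n:ℝ)^k * (Δ/τ) :=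
                pow_entry_diff _ _ _ (by positivity) (hE P) hPowB hEd k a b
            _ ≤ (K:ℝ) * (n:ℝ)^K * (Δ/τ) := by
                have h1 : (k:ℝ) ≤ (K:ℝ) := by exact_mod_cast hkK
                have h2 : (n:ℝ)^k ≤ (n:ℝ)^K := pow_le_pow_right₀ hn1 hkK
                have h3 : (0:ℝ) ≤ Δ/τ := by positivity
                have h4 : (0:ℝ) ≤ (n:ℝ)^k := by positivity
                exact mul_le_mul_of_nonneg_right (mul_le_mul h1 h2 h4 (by positivity)) h3
      _ = (K:ℝ) * ((K:ℝ) * (n:ℝ)^K * (Δ/τ)) := by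
          rw [Finset.sum_const, Nat.card_Icc, nsmul_eq_mul]
          norm_num
      _ = (K:ℝ)^2 * (n:ℝ)^K * (Δ/τ) := by ring
  have hne : ({a}ᶜ : Finset (Fin n)).Nonempty := by
    obtain ⟨b, hb⟩ := Fintype.exists_ne_of_one_lt_card (by simp; omega) a
    exact ⟨b, by simpa using hb⟩
  have hmain := softmin_lip τ hτ ({a}ᶜ : Finset (Fin n)) hne
    (fun b => softReach P τ K a b) (fun b => softReach P' τ K a b)
    ((K:ℝ)^2 * (n:ℝ)^K * (Δ/τ)) (fun b _ => hreach b)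
  calc |tcScore P τ K a - tcScore P' τ K a| ≤ (K:ℝ)^2 * (n:ℝ)^K * (Δ/τ) := hmain
    _ = (K:ℝ)^2 * (n:ℝ)^K / τ * Δ := by ring
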